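/- Let ζ₁₂ = e^{2πi/12} and let ι be the linear map (x₁,x₂,x₃,x₄,x₅) ↦ (ζ₁₂⁸ x₂, ζ₁₂⁸ x₁, x₃, ζ₁₂⁴ x₄, ζ₁₂ x₅) of ℂ⁵. Let f = x₁x₂x₃ + x₁(x₄² − x₅²) + x₂(x₄² + x₅²) + x₃²x₄. Then ι has order 12, f ∘ ι = ζ₁₂⁴ · f (so ι preserves the hypersurface {f = 0} ⊂ P⁴), and the induced map on P⁴ swaps the two points [1:0:0:0:0] and [0:1:0:0:0]. -/

import Mathlib

/-- For `ζ₁₂ = e^{2πi/12}`, the linear map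
`ι : (x₁,…,x₅) ↦ (ζ₁₂⁸x₂, ζ₁₂⁸x₁, x₃, ζ₁₂⁴x₄, ζ₁₂x₅)` has order 12, satisfies
`f ∘ ι = ζ₁₂⁴·f` for the 2-nodal cubic
`f = x₁x₂x₃ + x₁(x₄² - x₅²) + x₂(x₄² + x₅²) + x₃²x₄` (so `ι` preserves `{f = 0}`),
and the induced map on `ℙ⁴` swaps the two points `[1:0:0:0:0]` and `[0:1:0:0:0]`. -/
theorem stmt_18 (ζ : ℂ) (hζ : ζ = Complex.exp (2 * Real.pi * Complex.I / 12))
    (ι : (Fin 5 → ℂ) → (Fin 5 → ℂ))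
    (hι : ∀ x, ι x = ![ζ ^ 8 * x 1, ζ ^ 8 * x 0, x 2, ζ ^ 4 * x 3, ζ * x 4])
    (f : (Fin 5 → ℂ) → ℂ)
    (hf : ∀ x, f x = x 0 * x 1 * x 2 + x 0 * ((x 3) ^ 2 - (x 4) ^ 2) +
      x 1 * ((x 3) ^ 2 + (x 4) ^ 2) + (x 2) ^ 2 * x 3) :
    (ι^[12] = id ∧ ∀ k : ℕ, 0 < k → k < 12 → ι^[k] ≠ id) ∧
    (∀ x, f (ι x) = ζ ^ 4 * f x) ∧
    (∃ c : ℂ, c ≠ 0 ∧ ι ![1, 0, 0, 0, 0] = c • ![0, 1, 0, 0, 0]) ∧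
    (∃ c : ℂ, c ≠ 0 ∧ ι ![0, 1, 0, 0, 0] = c • ![1, 0, 0, 0, 0]) := by
  have hprim : IsPrimitiveRoot ζ 12 := by
    have h := Complex.isPrimitiveRoot_exp 12 (by norm_num)
    rw [hζ]
    convert h using 3
    norm_num
  have hζ12 : ζ ^ 12 = 1 := hprim.pow_eq_one
  have hζ0 : ζ ≠ 0 := by
    intro h
    rw [h] at hζ12; norm_num at hζ12
  have h6 : ζ ^ 6 = -1 := by
    have h2 : (ζ ^ 6 - 1) * (ζ ^ 6 + 1) = 0 := by linear_combination hζ12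
    rcases mul_eq_zero.mp h2 with h | h
    · exact absurd (sub_eq_zero.mp h)
        (hprim.pow_ne_one_of_pos_of_lt (by norm_num) (by norm_num))
    · linear_combination h
  have hcoord : ∀ n x, (ι^[n] x) 4 = ζ ^ n * x 4 := by
    intro n
    induction n with
    | zero => intro x; simp
    | succ n ih =>
      intro x
      rw [Function.iterate_succ_apply', hι, ih]
      simp [Matrix.cons_val_four]
      ring
  refine ⟨⟨?_, ?_⟩, ?_, ?_, ?_⟩
  · have h2 : ∀ x : Fin 5 → ℂ, ι (ι x) = ![ζ^4 * x 0, ζ^4 * x 1, x 2, ζ^8 * x 3, ζ^2 * x 4] := by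
      intro x
      rw [hι, hι]
      funext i
      fin_cases i <;> simp
      · linear_combination ζ^4 * x 0 * hζ12
      · linear_combination ζ^4 * x 1 * hζ12
      · ring
      · ring
    have h4 : ∀ x : Fin 5 → ℂ, ι^[4] x = ![ζ^8 * x 0, ζ^8 * x 1, x 2, ζ^4 * x 3, ζ^4 * x 4] := by
      intro x
      show ι (ι (ι (ι x))) = _
      rw [h2, h2]
      funext i
      fin_cases i <;> simp
      · ring
      · ring
      · linear_combination ζ^4 * x 3 * hζ12
      · ring
    funext x
    rw [show (12:ℕ) = 4 + (4 + 4) from rfl, Function.iterate_add_apply,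
      Function.iterate_add_apply, h4, h4, h4]
    funext i
    fin_cases i <;> simp
    · linear_combination (ζ^12 + 1) * x 0 * hζ12
    · linear_combination (ζ^12 + 1) * x 1 * hζ12
    · linear_combination x 3 * hζ12
    · linear_combination x 4 * hζ12
  · intro k hk0 hk12 heq
    have h1 : (ι^[k] ![0,0,0,0,1]) 4 = ζ ^ k * 1 := by
      rw [hcoord]; rfl
    rw [heq] at h1
    simp at h1
    exact hprim.pow_ne_one_of_pos_of_lt hk0.ne' hk12 (by rw [← h1])
  · intro x
    rw [hf, hf, hι]
    simp only [Matrix.cons_val_zero, Matrix.cons_val_one, Matrix.head_cons,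
      Matrix.cons_val_two, Matrix.tail_cons, Matrix.cons_val_three, Matrix.cons_val_four]
    linear_combination (ζ^4*(x 0*x 1*x 2 + x 0*(x 3)^2 + x 1*(x 3)^2))*hζ12 +
      (ζ^4*(x 0 - x 1)*(x 4)^2)*h6
  · exact ⟨ζ ^ 8, pow_ne_zero _ hζ0, by rw [hι]; funext i; fin_cases i <;> simp⟩
  · exact ⟨ζ ^ 8, pow_ne_zero _ hζ0, by rw [hι]; funext i; fin_cases i <;> simp⟩
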